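/- There exists a universal constant C > 0 such that the following holds. Let n be a positive integer, let μ_1, …, μ_n ∈ ℝ, and let σ_1, …, σ_n ≥ 0 and σ'_1, …, σ'_n ≥ 0. Let X_1, …, X_n be independent random variables with X_i Gaussian with mean μ_i and variance σ_i², and let Y_1, …, Y_n be independent random variables with Y_i Gaussian with mean μ_i and variance σ'_i². Then |E[max_{i∈[n]} X_i] − E[max_{i∈[n]} Y_i]| ≤ C · Σ_{i=1}^n |σ_i − σ'_i|. -/

import Mathlib

open MeasureTheory ProbabilityTheory Real Set

section sups
variable {ι : Type*} [Fintype ι] [Nonempty ι]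

lemma sup_sub_sup_le (a b : ι → ℝ) :
    (⨆ i, a i) - (⨆ i, b i) ≤ ∑ i, |a i - b i| := by
  rw [sub_le_iff_le_add]
  refine ciSup_le fun i => ?_
  have h1 : a i ≤ b i + |a i - b i| := by
    have := le_abs_self (a i - b i); linarith
  calc a i ≤ b i + |a i - b i| := h1
    _ ≤ (⨆ j, b j) + ∑ j, |a j - b j| :=
        add_le_add (le_ciSup (Set.finite_range b).bddAbove i)
          (Finset.single_le_sum (f := fun j => |a j - b j|) (fun j _ => abs_nonneg _) (Finset.mem_univ i))
    _ = (∑ j, |a j - b j|) + ⨆ j, b j := add_comm _ _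

lemma abs_sup_sub_sup_le (a b : ι → ℝ) :
    |(⨆ i, a i) - (⨆ i, b i)| ≤ ∑ i, |a i - b i| := by
  rw [abs_sub_le_iff]
  refine ⟨sup_sub_sup_le a b, ?_⟩
  simpa [abs_sub_comm] using sup_sub_sup_le b a

lemma abs_sup_le (a : ι → ℝ) : |⨆ i, a i| ≤ ∑ i, |a i| := by
  have := abs_sup_sub_sup_le a (fun _ => (0:ℝ))
  simpa [ciSup_const] using this

end sups

lemma map_joint {n : ℕ} {Ω : Type} [MeasurableSpace Ω] (P : Measure Ω)
    [IsProbabilityMeasure P] (X : Fin n → Ω → ℝ) (hX : ∀ i, Measurable (X i))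
    (h : iIndepFun X P) :
    Measure.map (fun ω i => X i ω) P = Measure.pi (fun i => Measure.map (X i) P) := by
  haveI : ∀ i, IsProbabilityMeasure (Measure.map (X i) P) :=
    fun i => Measure.isProbabilityMeasure_map (hX i).aemeasurable
  refine (Measure.pi_eq fun s hs => ?_).symm
  rw [Measure.map_apply (measurable_pi_lambda _ hX) (MeasurableSet.univ_pi hs)]
  have hset : (fun ω (i : Fin n) => X i ω) ⁻¹' Set.pi Set.univ s
      = ⋂ i ∈ Finset.univ, X i ⁻¹' s i := by
    ext ω; simp [Set.mem_pi]
  rw [hset, h.measure_inter_preimage_eq_mul Finset.univ (fun i _ => hs i)]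
  exact Finset.prod_congr rfl fun i _ => (Measure.map_apply (hX i) (hs i)).symm

lemma pi_map_comp {n : ℕ} (f : Fin n → ℝ → ℝ) (hf : ∀ i, Measurable (f i))
    (μ : Fin n → Measure ℝ) [∀ i, IsProbabilityMeasure (μ i)] :
    (Measure.pi μ).map (fun z i => f i (z i)) = Measure.pi (fun i => (μ i).map (f i)) := by
  haveI : ∀ i, IsProbabilityMeasure ((μ i).map (f i)) :=
    fun i => Measure.isProbabilityMeasure_map (hf i).aemeasurable
  refine (Measure.pi_eq fun s hs => ?_).symm
  have hg : Measurable (fun (z : Fin n → ℝ) (i : Fin n) => f i (z i)) :=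
    measurable_pi_lambda _ fun i => (hf i).comp (measurable_pi_apply i)
  rw [Measure.map_apply hg (MeasurableSet.univ_pi hs)]
  have hset : (fun z (i : Fin n) => f i (z i)) ⁻¹' Set.pi Set.univ s
      = Set.pi Set.univ (fun i => f i ⁻¹' s i) := by ext z; simp [Set.mem_pi]
  rw [hset, Measure.pi_pi]
  exact Finset.prod_congr rfl fun i _ => (Measure.map_apply (hf i) (hs i)).symm

lemma pi_map_eval {n : ℕ} (μ : Fin n → Measure ℝ) [∀ i, IsProbabilityMeasure (μ i)] (i : Fin n) :
    (Measure.pi μ).map (fun z => z i) = μ i := by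
  ext s hs
  rw [Measure.map_apply (measurable_pi_apply i) hs]
  have hset : (fun z : Fin n → ℝ => z i) ⁻¹' s
      = Set.pi Set.univ (Function.update (fun _ => (Set.univ : Set ℝ)) i s) := by
    ext z
    simp only [Set.mem_preimage, Set.mem_pi, Set.mem_univ, true_implies]
    constructor
    · intro hz j
      rcases eq_or_ne j i with rfl | hj
      · simpa using hz
      · simp [Function.update_of_ne hj]
    · intro hz; simpa using hz i
  rw [hset, Measure.pi_pi,
    Finset.prod_eq_single i (fun j _ hj => by simp [Function.update_of_ne hj]) (by simp)]
  simp

lemma gauss_affine (m s : ℝ) :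
    (gaussianReal 0 1).map (fun z => m + s * z) = gaussianReal m (Real.toNNReal (s ^ 2)) := by
  have h1 : (gaussianReal 0 1).map (fun z => s * z)
      = gaussianReal (s * 0) (⟨s^2, sq_nonneg s⟩ * 1) :=
    gaussianReal_map_const_mul (μ := 0) (v := 1) s
  have h2 : (fun z : ℝ => m + z) ∘ (fun z : ℝ => s * z) = fun z => m + s * z := rfl
  rw [← h2, ← Measure.map_map (measurable_const_add m) (measurable_const_mul s), h1,
    gaussianReal_map_const_add m]
  congr 1
  · ring
  · ext
    simp [Real.coe_toNNReal _ (sq_nonneg s)]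
    exact mul_one (s ^ 2)

lemma integrable_id_gauss : Integrable (fun x : ℝ => x) (gaussianReal 0 1) := by
  rw [gaussianReal_of_var_ne_zero _ one_ne_zero]
  rw [integrable_withDensity_iff (measurable_gaussianPDF _ _)
    (Filter.Eventually.of_forall fun x => ENNReal.ofReal_lt_top)]
  have h : Integrable (fun x : ℝ => (Real.sqrt (2 * π))⁻¹ * (x * Real.exp (-(2⁻¹:ℝ) * x ^ 2))) :=
    (integrable_mul_exp_neg_mul_sq (by norm_num : (0:ℝ) < 2⁻¹)).const_mul _
  have hpd : ∀ x : ℝ, (gaussianPDF 0 1 x).toReal = gaussianPDFReal 0 1 x := fun x =>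
    ENNReal.toReal_ofReal (gaussianPDFReal_nonneg _ _ _)
  refine h.congr (Filter.Eventually.of_forall fun x => ?_)
  dsimp only
  rw [hpd]
  simp only [gaussianPDFReal, NNReal.coe_one, mul_one, sub_zero]
  rw [show (-x ^ 2 / 2 : ℝ) = -2⁻¹ * x ^ 2 by ring]
  ring

lemma expected_max_eq {n : ℕ} {Ω : Type} [MeasurableSpace Ω] (P : Measure Ω)
    [IsProbabilityMeasure P] (μ σ : Fin n → ℝ) (X : Fin n → Ω → ℝ)
    (hX : ∀ i, Measurable (X i))
    (hind : iIndepFun X P)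
    (hlaw : ∀ i, Measure.map (X i) P = gaussianReal (μ i) (Real.toNNReal ((σ i) ^ 2))) :
    ∫ ω, ⨆ i, X i ω ∂P
      = ∫ z, (⨆ i, (μ i + σ i * z i)) ∂(Measure.pi fun _ : Fin n => gaussianReal 0 1) := by
  have hF : Measurable (fun v : Fin n → ℝ => ⨆ i, v i) :=
    Measurable.iSup (fun i => measurable_pi_apply i)
  have hJ : Measurable (fun ω (i : Fin n) => X i ω) := measurable_pi_lambda _ hX
  have h1 : ∫ ω, ⨆ i, X i ω ∂P = ∫ v, (⨆ i, v i) ∂(Measure.map (fun ω i => X i ω) P) :=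
    (integral_map hJ.aemeasurable hF.aestronglyMeasurable).symm
  rw [h1, map_joint P X hX hind]
  have h2 : (fun i : Fin n => Measure.map (X i) P)
      = fun i => (gaussianReal 0 1).map (fun z => μ i + σ i * z) := by
    funext i; rw [hlaw i, gauss_affine]
  have hg : Measurable (fun (z : Fin n → ℝ) (i : Fin n) => μ i + σ i * z i) :=
    measurable_pi_lambda _ fun i => measurable_const.add ((measurable_pi_apply i).const_mul _)
  rw [h2, ← pi_map_comp (fun i z => μ i + σ i * z)
      (fun i => measurable_const.add (measurable_id.const_mul _)),
    integral_map hg.aemeasurable hF.aestronglyMeasurable]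

/-- Lipschitz property of the expected maximum of independent Gaussians with respect to the
standard deviations: there is a universal constant `C > 0` such that the expected maxima of
two families of independent Gaussians with the same means differ by at most
`C * ∑ i, |σ i - σ' i|`. -/
theorem expected_max_lipschitz_in_stddev :
    ∃ C : ℝ, 0 < C ∧
      ∀ (n : ℕ), 0 < n →
      ∀ (Ω : Type) (_ : MeasurableSpace Ω) (P : Measure Ω), IsProbabilityMeasure P →
      ∀ (Ω' : Type) (_ : MeasurableSpace Ω') (P' : Measure Ω'), IsProbabilityMeasure P' →
      ∀ (μ σ σ' : Fin n → ℝ) (X : Fin n → Ω → ℝ) (Y : Fin n → Ω' → ℝ),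
        (∀ i, 0 ≤ σ i) → (∀ i, 0 ≤ σ' i) →
        (∀ i, Measurable (X i)) → (∀ i, Measurable (Y i)) →
        iIndepFun X P →
        iIndepFun Y P' →
        (∀ i, Measure.map (X i) P = gaussianReal (μ i) (Real.toNNReal ((σ i) ^ 2))) →
        (∀ i, Measure.map (Y i) P' = gaussianReal (μ i) (Real.toNNReal ((σ' i) ^ 2))) →
        |(∫ ω, ⨆ i, X i ω ∂P) - ∫ ω, ⨆ i, Y i ω ∂P'| ≤ C * ∑ i, |σ i - σ' i| := by
  classical
  have hK0 : 0 ≤ ∫ x, |x| ∂(gaussianReal 0 1) := integral_nonneg fun x => abs_nonneg x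
  refine ⟨(∫ x, |x| ∂(gaussianReal 0 1)) + 1, by linarith, ?_⟩
  intro n hn Ω mΩ P hP Ω' mΩ' P' hP' μ σ σ' X Y hσ hσ' hX hY hindX hindY hlawX hlawY
  haveI : Nonempty (Fin n) := ⟨⟨0, hn⟩⟩
  have hzi : ∀ i : Fin n, Integrable (fun z : Fin n → ℝ => z i)
      (Measure.pi fun _ : Fin n => gaussianReal 0 1) := by
    intro i
    have hmap : (Measure.pi fun _ : Fin n => gaussianReal 0 1).map (fun z => z i)
        = gaussianReal 0 1 := pi_map_eval _ i
    have h1 : Integrable (fun x : ℝ => x)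
        ((Measure.pi fun _ : Fin n => gaussianReal 0 1).map (fun z => z i)) := by
      rw [hmap]; exact integrable_id_gauss
    exact (integrable_map_measure aestronglyMeasurable_id
      (measurable_pi_apply i).aemeasurable).mp h1
  have habs : ∀ i : Fin n, Integrable (fun z : Fin n → ℝ => |z i|)
      (Measure.pi fun _ : Fin n => gaussianReal 0 1) := fun i => (hzi i).abs
  have hKi : ∀ i : Fin n,
      ∫ z, |z i| ∂(Measure.pi fun _ : Fin n => gaussianReal 0 1)
        = ∫ x, |x| ∂(gaussianReal 0 1) := by
    intro i
    have hmap : (Measure.pi fun _ : Fin n => gaussianReal 0 1).map (fun z => z i)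
        = gaussianReal 0 1 := pi_map_eval _ i
    have h2 := integral_map (μ := Measure.pi fun _ : Fin n => gaussianReal 0 1)
      (φ := fun z : Fin n → ℝ => z i) (f := fun x : ℝ => |x|)
      (measurable_pi_apply i).aemeasurable
      (show Measurable fun x : ℝ => |x| from measurable_id.abs).aestronglyMeasurable
    rw [hmap] at h2
    exact h2.symm
  have hsupint : ∀ τ : Fin n → ℝ, (∀ i, 0 ≤ τ i) →
      Integrable (fun z : Fin n → ℝ => ⨆ i, (μ i + τ i * z i))
        (Measure.pi fun _ : Fin n => gaussianReal 0 1) := by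
    intro τ hτ
    have hmeas : Measurable (fun z : Fin n → ℝ => ⨆ i, (μ i + τ i * z i)) :=
      Measurable.iSup fun i => measurable_const.add ((measurable_pi_apply i).const_mul _)
    have hdom : Integrable (fun z : Fin n → ℝ => ∑ i, (|μ i| + τ i * |z i|))
        (Measure.pi fun _ : Fin n => gaussianReal 0 1) :=
      integrable_finset_sum _ fun i _ => (integrable_const _).add ((habs i).const_mul _)
    refine hdom.mono' hmeas.aestronglyMeasurable (Filter.Eventually.of_forall fun z => ?_)
    rw [Real.norm_eq_abs]
    calc |⨆ i, (μ i + τ i * z i)| ≤ ∑ i, |μ i + τ i * z i| := abs_sup_le _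
      _ ≤ ∑ i, (|μ i| + τ i * |z i|) := Finset.sum_le_sum fun i _ => by
          calc |μ i + τ i * z i| ≤ |μ i| + |τ i * z i| := abs_add_le _ _
            _ = |μ i| + τ i * |z i| := by rw [abs_mul, abs_of_nonneg (hτ i)]
  have hA := hsupint σ hσ
  have hB := hsupint σ' hσ'
  rw [expected_max_eq P μ σ X hX hindX hlawX, expected_max_eq P' μ σ' Y hY hindY hlawY,
    ← integral_sub hA hB]
  have hptw : ∀ z : Fin n → ℝ,
      |(⨆ i, (μ i + σ i * z i)) - ⨆ i, (μ i + σ' i * z i)| ≤ ∑ i, |σ i - σ' i| * |z i| := by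
    intro z
    refine (abs_sup_sub_sup_le _ _).trans_eq ?_
    refine Finset.sum_congr rfl fun i _ => ?_
    rw [show μ i + σ i * z i - (μ i + σ' i * z i) = (σ i - σ' i) * z i by ring, abs_mul]
  calc |∫ z, ((⨆ i, (μ i + σ i * z i)) - ⨆ i, (μ i + σ' i * z i))
          ∂(Measure.pi fun _ : Fin n => gaussianReal 0 1)|
      ≤ ∫ z, |(⨆ i, (μ i + σ i * z i)) - ⨆ i, (μ i + σ' i * z i)|
          ∂(Measure.pi fun _ : Fin n => gaussianReal 0 1) :=
        by
          simpa [Real.norm_eq_abs] using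
            norm_integral_le_integral_norm (μ := Measure.pi fun _ : Fin n => gaussianReal 0 1)
              (fun z => (⨆ i, (μ i + σ i * z i)) - ⨆ i, (μ i + σ' i * z i))
    _ ≤ ∫ z, ∑ i, |σ i - σ' i| * |z i| ∂(Measure.pi fun _ : Fin n => gaussianReal 0 1) :=
        integral_mono (hA.sub hB).abs
          (integrable_finset_sum _ fun i _ => (habs i).const_mul _) hptw
    _ = ∑ i, |σ i - σ' i| * ∫ x, |x| ∂(gaussianReal 0 1) := by
        rw [integral_finset_sum _ fun i _ => (habs i).const_mul _]
        exact Finset.sum_congr rfl fun i _ => by rw [integral_const_mul, hKi i]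
    _ ≤ ∑ i, |σ i - σ' i| * ((∫ x, |x| ∂(gaussianReal 0 1)) + 1) :=
        Finset.sum_le_sum fun i _ =>
          mul_le_mul_of_nonneg_left (by linarith) (abs_nonneg _)
    _ = ((∫ x, |x| ∂(gaussianReal 0 1)) + 1) * ∑ i, |σ i - σ' i| := by
        rw [Finset.mul_sum]
        exact Finset.sum_congr rfl fun i _ => mul_comm _ _
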